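/- Let U be a Banach space and K ⊆ U a set with radius R = sup_{u∈K} ‖u‖ < ∞. Define the decoder width d^Deco_{n,l}(K) = inf over l-Lipschitz maps D : ℝⁿ → U of sup_{u∈K} inf_{‖z‖₂≤1} ‖u − D(z)‖, and the stable manifold width d^SMani_{n,l}(K) = inf over pairs of l-Lipschitz maps E : U → ℝⁿ, D : ℝⁿ → U of sup_{u∈K} ‖u − D(E(u))‖. Then d^Deco_{n,l²R}(K) ≤ d^SMani_{n,l}(K). -/

import Mathlib

open Metric

variable {U : Type*} [NormedAddCommGroup U] [NormedSpace ℝ U] [CompleteSpace U]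

/-- Worst-case approximation error of a decoder `D` on the set `K`:
`sup_{u ∈ K} inf_{‖z‖ ≤ 1} ‖u - D z‖`. -/
noncomputable def decErr {n : ℕ} (D : EuclideanSpace ℝ (Fin n) → U) (K : Set U) : ℝ :=
  sSup ((fun u => infDist u (D '' closedBall (0 : EuclideanSpace ℝ (Fin n)) 1)) '' K)

/-- The decoder width `d^Deco_{n,l}(K)`. -/
noncomputable def decWidth (n : ℕ) (l : NNReal) (K : Set U) : ℝ :=
  sInf { e | ∃ D : EuclideanSpace ℝ (Fin n) → U, LipschitzWith l D ∧ e = decErr D K }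

/-- The stable manifold width `d^SMani_{n,l}(K)`. -/
noncomputable def sManiWidth (n : ℕ) (l : NNReal) (K : Set U) : ℝ :=
  sInf { e | ∃ (E : U → EuclideanSpace ℝ (Fin n)) (D : EuclideanSpace ℝ (Fin n) → U),
    LipschitzWith l E ∧ LipschitzWith l D ∧
    e = sSup ((fun u => ‖u - D (E u)‖) '' K) }

theorem decWidth_le_sManiWidth (n : ℕ) (l : NNReal) (K : Set U) (hK : K.Nonempty)
    (R : NNReal) (hRpos : 0 < R)
    (hbdd : BddAbove ((fun u => ‖u‖₊) '' K))
    (hR : R = sSup ((fun u => ‖u‖₊) '' K)) :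
    decWidth n (l ^ 2 * R) K ≤ sManiWidth n l K := by
  have hnormR : ∀ u ∈ K, ‖u‖ ≤ (R : ℝ) := by
    intro u hu
    have : ‖u‖₊ ≤ R := hR ▸ le_csSup hbdd ⟨u, hu, rfl⟩
    exact_mod_cast this
  apply le_csInf
  · exact ⟨_, fun _ => 0, fun _ => 0,
      (LipschitzWith.const _).weaken zero_le,
      (LipschitzWith.const _).weaken zero_le, rfl⟩
  rintro e ⟨E, D, hE, hD, rfl⟩
  set c := E 0 with hc
  set a : NNReal := l * R with ha
  set D' : EuclideanSpace ℝ (Fin n) → U := fun z => D ((a : ℝ) • z + c) with hD'def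
  have haff : LipschitzWith a (fun z : EuclideanSpace ℝ (Fin n) => (a : ℝ) • z + c) := by
    apply LipschitzWith.of_dist_le_mul
    intro x y
    rw [dist_eq_norm, dist_eq_norm,
      show (a : ℝ) • x + c - ((a : ℝ) • y + c) = (a : ℝ) • (x - y) by module,
      norm_smul]
    simp
  have hD' : LipschitzWith (l ^ 2 * R) D' := by
    have h := hD.comp haff
    have : l ^ 2 * R = l * a := by rw [ha]; ring
    rw [this]
    exact h
  -- bound on image elements
  have hEdist : ∀ u ∈ K, ‖E u - c‖ ≤ (a : ℝ) := by
    intro u hu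
    have h1 : dist (E u) (E 0) ≤ (l : ℝ) * dist u 0 := hE.dist_le_mul u 0
    rw [dist_eq_norm, dist_eq_norm, sub_zero] at h1
    calc ‖E u - c‖ ≤ (l : ℝ) * ‖u‖ := h1
      _ ≤ (l : ℝ) * R := by
          exact mul_le_mul_of_nonneg_left (hnormR u hu) l.coe_nonneg
      _ = (a : ℝ) := by push_cast [ha]; ring
  have hMbdd : BddAbove ((fun u => ‖u - D (E u)‖) '' K) := by
    refine ⟨(R : ℝ) + (l : ℝ) * a + ‖D c‖, ?_⟩
    rintro x ⟨u, hu, rfl⟩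
    have h1 : ‖D (E u) - D c‖ ≤ (l : ℝ) * ‖E u - c‖ := by
      have := hD.dist_le_mul (E u) c
      rwa [dist_eq_norm, dist_eq_norm] at this
    calc ‖u - D (E u)‖ ≤ ‖u‖ + ‖D (E u)‖ := norm_sub_le _ _
      _ ≤ ‖u‖ + (‖D (E u) - D c‖ + ‖D c‖) := by
          gcongr
          have := norm_add_le (D (E u) - D c) (D c)
          simpa using this
      _ ≤ (R : ℝ) + ((l : ℝ) * a + ‖D c‖) := by
          gcongr
          · exact hnormR u hu
          · exact h1.trans (mul_le_mul_of_nonneg_left (hEdist u hu) l.coe_nonneg)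
      _ = (R : ℝ) + (l : ℝ) * a + ‖D c‖ := by ring
  have hM0 : 0 ≤ sSup ((fun u => ‖u - D (E u)‖) '' K) := by
    apply Real.sSup_nonneg
    rintro x ⟨u, hu, rfl⟩
    exact norm_nonneg _
  have hstep : decErr D' K ≤ sSup ((fun u => ‖u - D (E u)‖) '' K) := by
    apply Real.sSup_le _ hM0
    rintro x ⟨u, hu, rfl⟩
    have hmem : D (E u) ∈ D' '' closedBall (0 : EuclideanSpace ℝ (Fin n)) 1 := by
      by_cases h0 : (a : ℝ) = 0
      · refine ⟨0, by simp, ?_⟩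
        have hEu : E u = c := by
          have := hEdist u hu
          rw [h0] at this
          have := le_antisymm this (norm_nonneg _)
          rwa [norm_eq_zero, sub_eq_zero] at this
        simp [hD'def, hEu]
      · refine ⟨(a : ℝ)⁻¹ • (E u - c), ?_, ?_⟩
        · rw [mem_closedBall, dist_zero_right, norm_smul, norm_inv, Real.norm_eq_abs,
            abs_of_nonneg a.coe_nonneg]
          rw [inv_mul_le_iff₀ (lt_of_le_of_ne a.coe_nonneg (Ne.symm h0)), mul_one]
          exact hEdist u hu
        · simp only [hD'def]
          rw [smul_smul, mul_inv_cancel₀ h0, one_smul, sub_add_cancel]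
    calc infDist u (D' '' closedBall (0 : EuclideanSpace ℝ (Fin n)) 1)
        ≤ dist u (D (E u)) := infDist_le_dist_of_mem hmem
      _ = ‖u - D (E u)‖ := dist_eq_norm _ _
      _ ≤ sSup ((fun u => ‖u - D (E u)‖) '' K) := le_csSup hMbdd ⟨u, hu, rfl⟩
  have hdw : decWidth n (l ^ 2 * R) K ≤ decErr D' K := by
    apply csInf_le
    · refine ⟨0, ?_⟩
      rintro e ⟨D'', _, rfl⟩
      apply Real.sSup_nonneg
      rintro x ⟨u, hu, rfl⟩
      exact infDist_nonneg
    · exact ⟨D', hD', rfl⟩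
  exact hdw.trans hstep
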